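/- arXiv:1501.03640 — 2 statements merged into one kernel-verified Lean document; each statement's English description precedes it below -/
import Mathlib

section
/- Let E ⊆ ℕ and let μ : ℕ → (0,∞) be a scaling function (strictly decreasing with μ(n) → 0). Then the right upper porosity at 0 of the set μ(E) ⊆ ℝ⁺ equals the upper porosity of E at infinity w.r.t. μ: p̄(μ(E)) = p̄_μ(E). -/
open Filter Topology

/-- The length of the largest open subinterval of `(0, h)` containing no point of `E`. -/
noncomputable def lam (E : Set ℝ) (h : ℝ) : ℝ :=
  sSup {l : ℝ | ∃ a b : ℝ, 0 ≤ a ∧ a ≤ b ∧ b ≤ h ∧ Set.Ioo a b ∩ E = ∅ ∧ l = b - a}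

/-- The right upper porosity of `E ⊆ ℝ⁺` at `0`. -/
noncomputable def upperPorosity (E : Set ℝ) : ℝ :=
  Filter.limsup (fun h => lam E h / h) (nhdsWithin 0 (Set.Ioi 0))

/-- `lamMu μ E n`: the analogue of the largest-hole length at infinity, i.e. the supremum
of `μ a - μ b` over `n ≤ a < b` such that no element of `E` lies strictly between `a` and `b`. -/
noncomputable def lamMu (μ : ℕ → ℝ) (E : Set ℕ) (n : ℕ) : ℝ :=
  sSup {d : ℝ | ∃ a b : ℕ, n ≤ a ∧ a < b ∧ (∀ m : ℕ, a < m → m < b → m ∉ E) ∧ d = μ a - μ b}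

/-- The upper porosity of `E` at infinity w.r.t. the scaling function `μ`. -/
noncomputable def upperPorosityInf (μ : ℕ → ℝ) (E : Set ℕ) : ℝ :=
  Filter.limsup (fun n => lamMu μ E n / μ n) Filter.atTop

/-- The lower porosity of `E` at infinity w.r.t. the scaling function `μ`. -/
noncomputable def lowerPorosityInf (μ : ℕ → ℝ) (E : Set ℕ) : ℝ :=
  Filter.liminf (fun n => lamMu μ E n / μ n) Filter.atTop

/-- The set of porosity numbers of `E` at infinity w.r.t. `μ`. -/
def porosityNumbersInf (μ : ℕ → ℝ) (E : Set ℕ) : Set ℝ :=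
  {p : ℝ | ∃ n : ℕ → ℕ, StrictMono n ∧
    Tendsto (fun k => lamMu μ E (n k) / μ (n k)) atTop (nhds p)}

section Aux

variable {E : Set ℕ} {μ : ℕ → ℝ}

private lemma lamMu_set_nonempty (μ : ℕ → ℝ) (E : Set ℕ) (n : ℕ) :
    {d : ℝ | ∃ a b : ℕ, n ≤ a ∧ a < b ∧ (∀ m : ℕ, a < m → m < b → m ∉ E) ∧
      d = μ a - μ b}.Nonempty :=
  ⟨μ n - μ (n + 1), n, n + 1, le_rfl, Nat.lt_succ_self n,
    fun m h1 h2 => fun _ => by omega, rfl⟩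

private lemma lamMu_bddAbove (hμanti : StrictAnti μ) (hμpos : ∀ n, 0 < μ n) (n : ℕ) :
    BddAbove {d : ℝ | ∃ a b : ℕ, n ≤ a ∧ a < b ∧ (∀ m : ℕ, a < m → m < b → m ∉ E) ∧
      d = μ a - μ b} := by
  refine ⟨μ n, ?_⟩
  rintro d ⟨a, b, hna, hab, -, rfl⟩
  have h1 : μ a ≤ μ n := hμanti.antitone hna
  have h2 : 0 < μ b := hμpos b
  linarith

private lemma le_lamMu (hμanti : StrictAnti μ) (hμpos : ∀ n, 0 < μ n) {n a b : ℕ}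
    (hna : n ≤ a) (hab : a < b) (hgap : ∀ m, a < m → m < b → m ∉ E) :
    μ a - μ b ≤ lamMu μ E n :=
  le_csSup (lamMu_bddAbove hμanti hμpos n) ⟨a, b, hna, hab, hgap, rfl⟩

private lemma lamMu_le_mu (hμanti : StrictAnti μ) (hμpos : ∀ n, 0 < μ n) (n : ℕ) :
    lamMu μ E n ≤ μ n := by
  refine csSup_le (lamMu_set_nonempty μ E n) ?_
  rintro d ⟨a, b, hna, hab, -, rfl⟩
  have h1 : μ a ≤ μ n := hμanti.antitone hna
  have h2 : 0 < μ b := hμpos b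
  linarith

private lemma lamMu_nonneg (hμanti : StrictAnti μ) (hμpos : ∀ n, 0 < μ n) (n : ℕ) :
    0 ≤ lamMu μ E n := by
  have h1 : μ n - μ (n + 1) ≤ lamMu μ E n :=
    le_lamMu hμanti hμpos le_rfl (Nat.lt_succ_self n)
      (fun m h1 h2 => fun _ => by omega)
  have h2 : μ (n + 1) < μ n := hμanti (Nat.lt_succ_self n)
  linarith

private lemma mu_le_lamMu_of_no_gt (hμanti : StrictAnti μ) (hμpos : ∀ n, 0 < μ n)
    (hμ0 : Tendsto μ atTop (nhds 0)) {n a : ℕ} (hna : n ≤ a)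
    (hgt : ∀ m, a < m → m ∉ E) : μ a ≤ lamMu μ E n := by
  have h1 : Tendsto (fun b => μ a - μ b) atTop (nhds (μ a - 0)) :=
    tendsto_const_nhds.sub hμ0
  rw [sub_zero] at h1
  refine le_of_tendsto h1 ?_
  filter_upwards [eventually_gt_atTop a] with b hb
  exact le_lamMu hμanti hμpos hna hb (fun m hm _ => hgt m hm)

private lemma lam_set_nonempty (S : Set ℝ) {h : ℝ} (hh : 0 ≤ h) :
    {l : ℝ | ∃ a b : ℝ, 0 ≤ a ∧ a ≤ b ∧ b ≤ h ∧ Set.Ioo a b ∩ S = ∅ ∧ l = b - a}.Nonempty :=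
  ⟨0, 0, 0, le_rfl, le_rfl, hh, by simp, by ring⟩

private lemma lam_bddAbove (S : Set ℝ) (h : ℝ) :
    BddAbove {l : ℝ | ∃ a b : ℝ, 0 ≤ a ∧ a ≤ b ∧ b ≤ h ∧ Set.Ioo a b ∩ S = ∅ ∧ l = b - a} := by
  refine ⟨h, ?_⟩
  rintro l ⟨a, b, ha, hab, hbh, -, rfl⟩
  linarith

private lemma lam_nonneg (S : Set ℝ) {h : ℝ} (hh : 0 ≤ h) : 0 ≤ lam S h :=
  le_csSup (lam_bddAbove S h)
    (⟨0, 0, le_rfl, le_rfl, hh, by simp, by ring⟩ :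
      (0:ℝ) ∈ {l : ℝ | ∃ a b : ℝ, 0 ≤ a ∧ a ≤ b ∧ b ≤ h ∧ Set.Ioo a b ∩ S = ∅ ∧ l = b - a})

private lemma lam_le_self (S : Set ℝ) {h : ℝ} (hh : 0 ≤ h) : lam S h ≤ h := by
  refine csSup_le (lam_set_nonempty S hh) ?_
  rintro l ⟨a, b, ha, hab, hbh, -, rfl⟩
  linarith

private lemma lam_neg_empty (S : Set ℝ) {x : ℝ} (hx : x < 0) : lam S x = 0 := by
  unfold lam
  convert Real.sSup_empty using 2
  rw [Set.eq_empty_iff_forall_notMem]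
  rintro l ⟨a, b, ha, hab, hbx, -, rfl⟩
  linarith

private lemma r_nonneg (S : Set ℝ) (x : ℝ) : 0 ≤ lam S x / x := by
  rcases lt_trichotomy x 0 with hx | rfl | hx
  · simp [lam_neg_empty S hx]
  · simp
  · exact div_nonneg (lam_nonneg S hx.le) hx.le

private lemma r_le_one (S : Set ℝ) (x : ℝ) : lam S x / x ≤ 1 := by
  rcases lt_trichotomy x 0 with hx | rfl | hx
  · simp [lam_neg_empty S hx]
  · simp
  · exact (div_le_one hx).mpr (lam_le_self S hx.le)

private lemma lamMu_le_lam (hμanti : StrictAnti μ) (hμpos : ∀ n, 0 < μ n) (n : ℕ) :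
    lamMu μ E n ≤ lam (μ '' E) (μ n) := by
  refine csSup_le (lamMu_set_nonempty μ E n) ?_
  rintro d ⟨a, b, hna, hab, hgap, rfl⟩
  refine le_csSup (lam_bddAbove _ _)
    ⟨μ b, μ a, (hμpos b).le, (hμanti hab).le, hμanti.antitone hna, ?_, rfl⟩
  rw [Set.eq_empty_iff_forall_notMem]
  rintro x ⟨⟨hx1, hx2⟩, e, heE, rfl⟩
  exact hgap e (hμanti.lt_iff_gt.mp hx2) (hμanti.lt_iff_gt.mp hx1) heE

private lemma key_lemma (hμanti : StrictAnti μ) (hμpos : ∀ n, 0 < μ n)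
    (hμ0 : Tendsto μ atTop (nhds 0)) {n : ℕ} {h : ℝ}
    (h1 : μ (n + 1) < h) (h2 : h ≤ μ n) :
    lam (μ '' E) h ≤ h * max (lamMu μ E n / μ n) (lamMu μ E (n + 1) / μ (n + 1)) := by
  classical
  set M := max (lamMu μ E n / μ n) (lamMu μ E (n + 1) / μ (n + 1)) with hM
  have hpos : 0 < h := (hμpos (n + 1)).trans h1
  have hM0 : 0 ≤ M :=
    le_trans (div_nonneg (lamMu_nonneg hμanti hμpos n) (hμpos n).le) (le_max_left _ _)
  have hMn1 : lamMu μ E (n + 1) ≤ h * M := by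
    have hne : μ (n + 1) ≠ 0 := (hμpos (n + 1)).ne'
    have e1 : lamMu μ E (n + 1) = μ (n + 1) * (lamMu μ E (n + 1) / μ (n + 1)) := by
      field_simp
    rw [e1]
    exact mul_le_mul h1.le (le_max_right _ _)
      (div_nonneg (lamMu_nonneg hμanti hμpos _) (hμpos _).le) hpos.le
  refine csSup_le (lam_set_nonempty _ hpos.le) ?_
  rintro d ⟨x, y, hx0, hxy, hyh, hdisj, rfl⟩
  have hnotmem : ∀ e ∈ E, μ e ∉ Set.Ioo x y := by
    intro e he hmem
    have hmem2 : μ e ∈ Set.Ioo x y ∩ (μ '' E) := ⟨hmem, e, he, rfl⟩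
    rw [hdisj] at hmem2
    exact hmem2
  by_cases hEgt : ∃ e, n < e ∧ e ∈ E
  · obtain ⟨hne₀, he₀E⟩ := Nat.find_spec hEgt
    set e₀ := Nat.find hEgt with he₀def
    have he₀min : ∀ m, n < m → m < e₀ → m ∉ E := fun m hm1 hm2 hmE =>
      Nat.find_min hEgt hm2 ⟨hm1, hmE⟩
    by_cases hy : μ e₀ < y
    · -- the hole lies above μ e₀
      have hxe : μ e₀ ≤ x := by
        by_contra hcon
        push_neg at hcon
        exact hnotmem e₀ he₀E ⟨hcon, hy⟩
      have hRn : μ n - μ e₀ ≤ lamMu μ E n := le_lamMu hμanti hμpos le_rfl hne₀ he₀min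
      have hT : lamMu μ E n ≤ μ n := lamMu_le_mu hμanti hμpos n
      have hstep : h - μ e₀ ≤ h * (lamMu μ E n / μ n) := by
        rw [mul_div_assoc', le_div_iff₀ (hμpos n)]
        nlinarith [mul_le_mul_of_nonneg_left hRn hpos.le,
          mul_le_mul_of_nonneg_left h2 (hμpos e₀).le]
      have hfin : h * (lamMu μ E n / μ n) ≤ h * M :=
        mul_le_mul_of_nonneg_left (le_max_left _ _) hpos.le
      linarith
    · push_neg at hy
      rcases le_or_gt y x with hyx | hxy'
      · have hle0 : y - x ≤ 0 := by linarith
        exact hle0.trans (mul_nonneg hpos.le hM0)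
      have hy' : 0 < y := lt_of_le_of_lt hx0 hxy'
      obtain ⟨N₀, hN₀⟩ : ∃ N₀, μ N₀ < y := (hμ0.eventually (gt_mem_nhds hy')).exists
      set S := {a : ℕ | a ∈ E ∧ y ≤ μ a} with hS
      have hSne : S.Nonempty := ⟨e₀, he₀E, hy⟩
      have hSbdd : BddAbove S := by
        refine ⟨N₀, ?_⟩
        rintro a ⟨-, hya⟩
        by_contra hcon
        push_neg at hcon
        have : μ a < μ N₀ := hμanti hcon
        linarith
      set a := sSup S with ha
      have haS : a ∈ S := Nat.sSup_mem hSne hSbdd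
      have hae : e₀ ≤ a := le_csSup hSbdd ⟨he₀E, hy⟩
      have han : n + 1 ≤ a := le_trans hne₀ hae
      have hya' : y ≤ μ a := haS.2
      by_cases hb : ∃ b, a < b ∧ b ∈ E
      · obtain ⟨hab, hbE⟩ := Nat.find_spec hb
        set b := Nat.find hb with hbdef
        have hbmin : ∀ m, a < m → m < b → m ∉ E := fun m hm1 hm2 hmE =>
          Nat.find_min hb hm2 ⟨hm1, hmE⟩
        have hby : μ b < y := by
          by_contra hle
          push_neg at hle
          have : b ≤ a := le_csSup hSbdd ⟨hbE, hle⟩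
          omega
        have hbx : μ b ≤ x := by
          by_contra hcon
          push_neg at hcon
          exact hnotmem b hbE ⟨hcon, hby⟩
        have hpair : μ a - μ b ≤ lamMu μ E (n + 1) := le_lamMu hμanti hμpos han hab hbmin
        have : y - x ≤ lamMu μ E (n + 1) := by linarith
        linarith
      · push_neg at hb
        have hnogt : ∀ m, a < m → m ∉ E := fun m hm hmE => (hb m hm) hmE
        have hmua : μ a ≤ lamMu μ E (n + 1) :=
          mu_le_lamMu_of_no_gt hμanti hμpos hμ0 han hnogt
        have : y - x ≤ lamMu μ E (n + 1) := by linarith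
        linarith
  · -- no element of E above n
    push_neg at hEgt
    have hnogt : ∀ m, n < m → m ∉ E := fun m hm hmE => (hEgt m hm) hmE
    have hmun : μ n ≤ lamMu μ E n := mu_le_lamMu_of_no_gt hμanti hμpos hμ0 le_rfl hnogt
    have hM1 : 1 ≤ M := by
      refine le_trans ?_ (le_max_left _ _)
      rw [le_div_iff₀ (hμpos n)]
      linarith
    calc y - x ≤ h := by linarith
      _ = h * 1 := (mul_one h).symm
      _ ≤ h * M := mul_le_mul_of_nonneg_left hM1 hpos.le

end Aux

theorem upperPorosity_image_eq_upperPorosityInf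
    (E : Set ℕ) (μ : ℕ → ℝ) (hμanti : StrictAnti μ) (hμpos : ∀ n, 0 < μ n)
    (hμ0 : Tendsto μ atTop (nhds 0)) :
    upperPorosity (μ '' E) = upperPorosityInf μ E := by
  classical
  set r := fun h : ℝ => lam (μ '' E) h / h with hr
  set R := fun n : ℕ => lamMu μ E n / μ n with hRdef
  have hUP : upperPorosity (μ '' E) = limsup r (nhdsWithin (0:ℝ) (Set.Ioi 0)) := rfl
  have hUPI : upperPorosityInf μ E = limsup R atTop := rfl
  have hRnonneg : ∀ n, 0 ≤ R n := fun n =>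
    div_nonneg (lamMu_nonneg hμanti hμpos n) (hμpos n).le
  have hRle1 : ∀ n, R n ≤ 1 := fun n =>
    (div_le_one (hμpos n)).mpr (lamMu_le_mu hμanti hμpos n)
  have hrnonneg : ∀ x, 0 ≤ r x := r_nonneg _
  have hrle1 : ∀ x, r x ≤ 1 := r_le_one _
  have hmap : Tendsto μ atTop (nhdsWithin 0 (Set.Ioi 0)) :=
    tendsto_nhdsWithin_iff.mpr ⟨hμ0, Eventually.of_forall hμpos⟩
  have hcoR : IsCoboundedUnder (· ≤ ·) atTop R :=
    (isBoundedUnder_of (r := (· ≥ ·)) ⟨0, fun n => hRnonneg n⟩).isCoboundedUnder_le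
  have hbddr : IsBoundedUnder (· ≤ ·) (nhdsWithin (0:ℝ) (Set.Ioi 0)) r :=
    isBoundedUnder_of ⟨1, fun x => hrle1 x⟩
  have hcor : IsCoboundedUnder (· ≤ ·) (nhdsWithin (0:ℝ) (Set.Ioi 0)) r :=
    (isBoundedUnder_of (r := (· ≥ ·)) ⟨0, fun x => hrnonneg x⟩).isCoboundedUnder_le
  have hmapne : (Filter.map μ atTop).NeBot := map_neBot
  have hge : upperPorosityInf μ E ≤ upperPorosity (μ '' E) := by
    rw [hUP, hUPI]
    have step1 : limsup R atTop ≤ limsup (r ∘ μ) atTop := by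
      refine limsup_le_limsup (Eventually.of_forall fun n => ?_) hcoR
        (isBoundedUnder_of ⟨1, fun n => hrle1 (μ n)⟩)
      exact (div_le_div_iff_of_pos_right (hμpos n)).mpr (lamMu_le_lam hμanti hμpos n)
    have step2 : limsup (r ∘ μ) atTop = limsup r (Filter.map μ atTop) :=
      limsup_comp r μ atTop
    have step3 : limsup r (Filter.map μ atTop) ≤ limsup r (nhdsWithin (0:ℝ) (Set.Ioi 0)) := by
      refine limsup_le_limsup_of_le hmap ?_ hbddr
      exact (isBoundedUnder_of (r := (· ≥ ·)) ⟨0, fun x => hrnonneg x⟩).isCoboundedUnder_le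
    calc limsup R atTop ≤ limsup (r ∘ μ) atTop := step1
      _ = limsup r (Filter.map μ atTop) := step2
      _ ≤ limsup r (nhdsWithin (0:ℝ) (Set.Ioi 0)) := step3
  have hle : upperPorosity (μ '' E) ≤ upperPorosityInf μ E := by
    rw [hUP, hUPI]
    refine le_of_forall_gt_imp_ge_of_dense fun c hc => ?_
    have hev : ∀ᶠ n in atTop, R n < c :=
      eventually_lt_of_limsup_lt hc (isBoundedUnder_of ⟨1, fun n => hRle1 n⟩)
    obtain ⟨N, hN⟩ := eventually_atTop.mp hev
    refine limsup_le_of_le hcor ?_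
    filter_upwards [Ioo_mem_nhdsGT_of_mem (Set.mem_Ico.mpr ⟨le_rfl, hμpos N⟩)] with h hh
    obtain ⟨hh0, hhN⟩ := hh
    have hex : ∃ m, μ m < h := (hμ0.eventually (gt_mem_nhds hh0)).exists
    have hks : μ (Nat.find hex) < h := Nat.find_spec hex
    have hk0 : Nat.find hex ≠ 0 := by
      intro h0
      have hle0 : μ N ≤ μ 0 := hμanti.antitone (Nat.zero_le N)
      rw [h0] at hks
      linarith
    obtain ⟨n, hn⟩ := Nat.exists_eq_succ_of_ne_zero hk0
    have hn1 : μ (n + 1) < h := by rw [Nat.succ_eq_add_one] at hn; rw [← hn]; exact hks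
    have hn2 : h ≤ μ n := by
      by_contra hcon
      push_neg at hcon
      exact Nat.find_min hex (by omega) hcon
    have hnN : N ≤ n := by
      by_contra hcon
      push_neg at hcon
      have hle2 : μ N ≤ μ (n + 1) := hμanti.antitone (by omega)
      linarith
    have hkey := key_lemma (E := E) hμanti hμpos hμ0 hn1 hn2
    have hrh : r h ≤ max (R n) (R (n + 1)) := by
      show lam (μ '' E) h / h ≤ max (R n) (R (n + 1))
      rw [div_le_iff₀ hh0]
      calc lam (μ '' E) h ≤ h * max (R n) (R (n + 1)) := hkey
        _ = max (R n) (R (n + 1)) * h := mul_comm _ _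
    exact hrh.trans (max_le (hN n hnN).le (hN (n + 1) (by omega)).le)
  exact le_antisymm hle hge
end

section
/- Let α ∈ [0,1) ∪ (1,∞] and let μ₁, μ₂ be scaling functions. Suppose (n_k) is a strictly increasing sequence of natural numbers with lim_{k→∞} (μ₁(n_{k+1}) μ₂(n_k))/(μ₁(n_k) μ₂(n_{k+1})) = α, and set E = {n_k : k ∈ ℕ}. Then either p̄_{μ₁}(E) ≠ p̄_{μ₂}(E) or p̄_{μ₂}(E) = 1. -/
open Filter Topology

section Aux

variable {μ : ℕ → ℝ} {nseq : ℕ → ℕ}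

lemma mem_lamMu_set (hmono : StrictMono nseq) {n k : ℕ} (hnk : n ≤ nseq k) :
    μ (nseq k) - μ (nseq (k+1)) ∈ {d : ℝ | ∃ a b : ℕ, n ≤ a ∧ a < b ∧
      (∀ m : ℕ, a < m → m < b → m ∉ Set.range nseq) ∧ d = μ a - μ b} := by
  refine ⟨nseq k, nseq (k+1), hnk, hmono (Nat.lt_succ_self k), ?_, rfl⟩
  rintro m h1 h2 ⟨j, rfl⟩
  have := hmono.lt_iff_lt.mp h1
  have := hmono.lt_iff_lt.mp h2
  omega

lemma lamMu_set_bddAbove (hanti : StrictAnti μ) (hpos : ∀ n, 0 < μ n) (E : Set ℕ) (n : ℕ) :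
    BddAbove {d : ℝ | ∃ a b : ℕ, n ≤ a ∧ a < b ∧
      (∀ m : ℕ, a < m → m < b → m ∉ E) ∧ d = μ a - μ b} := by
  refine ⟨μ n, ?_⟩
  rintro d ⟨a, b, hna, hab, _, rfl⟩
  have h1 : μ a ≤ μ n := hanti.antitone hna
  have h2 : 0 < μ b := hpos b
  linarith

lemma hole_subset (hmono : StrictMono nseq) {a b : ℕ} (h0 : nseq 0 ≤ a) (hab : a < b)
    (hole : ∀ m, a < m → m < b → m ∉ Set.range nseq) :
    ∃ j, nseq j ≤ a ∧ b ≤ nseq (j+1) := by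
  classical
  set j := Nat.findGreatest (fun i => nseq i ≤ a) a with hj
  have hja : nseq j ≤ a := Nat.findGreatest_spec (P := fun i => nseq i ≤ a) (Nat.zero_le a) h0
  have hj1 : a < nseq (j+1) := by
    by_cases h : j + 1 ≤ a
    · exact Nat.lt_of_not_le (Nat.findGreatest_is_greatest (P := fun i => nseq i ≤ a) (n := a) (hj ▸ Nat.lt_succ_self j) h)
    · exact lt_of_lt_of_le (by omega) hmono.le_apply
  refine ⟨j, hja, ?_⟩
  by_contra h
  push_neg at h
  exact hole (nseq (j+1)) hj1 h ⟨j+1, rfl⟩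

lemma upper_eq (hanti : StrictAnti μ) (hpos : ∀ n, 0 < μ n) (hmono : StrictMono nseq) :
    upperPorosityInf μ (Set.range nseq)
      = 1 - Filter.liminf (fun k => μ (nseq (k+1)) / μ (nseq k)) atTop := by
  set r : ℕ → ℝ := fun k => μ (nseq (k+1)) / μ (nseq k) with hrdef
  set L : ℝ := Filter.liminf r atTop with hLdef
  have hr_pos : ∀ k, 0 < r k := fun k => div_pos (hpos _) (hpos _)
  have hr_lt1 : ∀ k, r k < 1 := fun k =>
    (div_lt_one (hpos _)).mpr (hanti (hmono (Nat.lt_succ_self k)))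
  have hrbdd_le : IsBoundedUnder (· ≤ ·) atTop r :=
    isBoundedUnder_of ⟨1, fun k => (hr_lt1 k).le⟩
  have hrbdd_ge : IsBoundedUnder (· ≥ ·) atTop r :=
    isBoundedUnder_of ⟨0, fun k => (hr_pos k).le⟩
  have hrcob_ge : IsCoboundedUnder (· ≥ ·) atTop r := hrbdd_le.isCoboundedUnder_ge
  set f : ℕ → ℝ := fun n => lamMu μ (Set.range nseq) n / μ n with hfdef
  have hSne : ∀ n : ℕ, Set.Nonempty {d : ℝ | ∃ a b : ℕ, n ≤ a ∧ a < b ∧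
      (∀ m : ℕ, a < m → m < b → m ∉ Set.range nseq) ∧ d = μ a - μ b} :=
    fun n => ⟨_, mem_lamMu_set hmono (hmono.le_apply : n ≤ nseq n)⟩
  have hlam_le : ∀ n, lamMu μ (Set.range nseq) n ≤ μ n := by
    intro n
    refine csSup_le (hSne n) ?_
    rintro d ⟨a, b, hna, hab, _, rfl⟩
    have h1 : μ a ≤ μ n := hanti.antitone hna
    have h2 : 0 < μ b := hpos b
    linarith
  have hf_le1 : ∀ n, f n ≤ 1 := fun n => (div_le_one (hpos n)).mpr (hlam_le n)
  have hfbdd_le : IsBoundedUnder (· ≤ ·) atTop f := isBoundedUnder_of ⟨1, hf_le1⟩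
  have hf_nonneg : ∀ n, 0 ≤ f n := by
    intro n
    have h1 : (0:ℝ) < μ (nseq n) - μ (nseq (n+1)) :=
      sub_pos.mpr (hanti (hmono (Nat.lt_succ_self n)))
    have h2 : μ (nseq n) - μ (nseq (n+1)) ≤ lamMu μ (Set.range nseq) n :=
      le_csSup (lamMu_set_bddAbove hanti hpos _ n) (mem_lamMu_set hmono hmono.le_apply)
    have h3 : 0 ≤ lamMu μ (Set.range nseq) n / μ n :=
      div_nonneg (by linarith) (hpos n).le
    exact h3
  have hfcob_le : IsCoboundedUnder (· ≤ ·) atTop f :=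
    (isBoundedUnder_of ⟨0, hf_nonneg⟩ : IsBoundedUnder (· ≥ ·) atTop f).isCoboundedUnder_le
  rw [upperPorosityInf]
  refine le_antisymm (le_of_forall_sub_le ?_) (le_of_forall_sub_le ?_)
  · -- limsup f ≤ 1 - L
    intro ε hε
    have hsuff : Filter.limsup f atTop ≤ 1 - L + ε := by
      have hev : ∀ᶠ j in atTop, L - ε < r j :=
        eventually_lt_of_lt_liminf (by rw [hLdef]; linarith) hrbdd_ge
      obtain ⟨J, hJ⟩ := eventually_atTop.mp hev
      refine limsup_le_of_le hfcob_le ?_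
      filter_upwards [eventually_ge_atTop (nseq J + 1)] with n hn
      rw [hfdef]
      rw [div_le_iff₀ (hpos n)]
      refine csSup_le (hSne n) ?_
      rintro d ⟨a, b, hna, hab, hole, rfl⟩
      have h0a : nseq 0 ≤ a := by
        have : nseq 0 ≤ nseq J := hmono.monotone (Nat.zero_le J)
        omega
      obtain ⟨j, hja, hbj⟩ := hole_subset hmono h0a hab hole
      have hjJ : J ≤ j := by
        have h1 : nseq J < nseq (j+1) := by omega
        have := hmono.lt_iff_lt.mp h1
        omega
      have hrj : L - ε < r j := hJ j hjJ
      have hμb : μ (nseq (j+1)) ≤ μ b := hanti.antitone hbj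
      have hrx : r j * μ (nseq j) = μ (nseq (j+1)) := div_mul_cancel₀ _ (hpos _).ne'
      have hkey : μ a - μ b ≤ (1 - r j) * μ n := by
        rcases le_total n (nseq j) with h | h
        · have hx : μ (nseq j) ≤ μ n := hanti.antitone h
          have h2 : μ a ≤ μ (nseq j) := hanti.antitone hja
          nlinarith [mul_le_mul_of_nonneg_left hx (sub_nonneg.mpr (hr_lt1 j).le)]
        · have hx : μ n ≤ μ (nseq j) := hanti.antitone h
          have h2 : μ a ≤ μ n := hanti.antitone hna
          nlinarith [mul_le_mul_of_nonneg_left hx (hr_pos j).le]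
      have : (1 - r j) * μ n ≤ (1 - L + ε) * μ n :=
        mul_le_mul_of_nonneg_right (by linarith) (hpos n).le
      linarith
    linarith
  · -- 1 - L ≤ limsup f
    intro ε hε
    have hfreq : ∃ᶠ k in atTop, r k < L + ε :=
      frequently_lt_of_liminf_lt hrcob_ge (by rw [hLdef]; linarith)
    have hfreq' : ∃ᶠ n in atTop, (1 - L - ε : ℝ) ≤ f n := by
      rw [frequently_atTop] at hfreq ⊢
      intro N
      obtain ⟨k, hkN, hk⟩ := hfreq N
      refine ⟨nseq k, le_trans hkN hmono.le_apply, ?_⟩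
      have h1 : μ (nseq k) - μ (nseq (k+1)) ≤ lamMu μ (Set.range nseq) (nseq k) :=
        le_csSup (lamMu_set_bddAbove hanti hpos _ _) (mem_lamMu_set hmono le_rfl)
      have h2 : 1 - r k ≤ f (nseq k) := by
        rw [hfdef]
        rw [le_div_iff₀ (hpos _)]
        have : (1 - r k) * μ (nseq k) = μ (nseq k) - μ (nseq (k+1)) := by
          rw [sub_mul, one_mul, div_mul_cancel₀ _ (hpos _).ne']
        linarith
      linarith
    have := le_limsup_of_frequently_le hfreq' hfbdd_le
    linarith

end Aux

theorem upperPorosityInf_ne_or_eq_one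
    (μ₁ μ₂ : ℕ → ℝ)
    (hμ₁anti : StrictAnti μ₁) (hμ₁pos : ∀ n, 0 < μ₁ n) (hμ₁0 : Tendsto μ₁ atTop (nhds 0))
    (hμ₂anti : StrictAnti μ₂) (hμ₂pos : ∀ n, 0 < μ₂ n) (hμ₂0 : Tendsto μ₂ atTop (nhds 0))
    (nseq : ℕ → ℕ) (hmono : StrictMono nseq)
    -- the ratios tend to α with α ∈ [0,1) ∪ (1,∞]
    (hα : (∃ α : ℝ, (0 ≤ α ∧ α < 1 ∨ 1 < α) ∧
        Tendsto (fun k => μ₁ (nseq (k + 1)) * μ₂ (nseq k) /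
          (μ₁ (nseq k) * μ₂ (nseq (k + 1)))) atTop (nhds α)) ∨
      Tendsto (fun k => μ₁ (nseq (k + 1)) * μ₂ (nseq k) /
        (μ₁ (nseq k) * μ₂ (nseq (k + 1)))) atTop atTop) :
    upperPorosityInf μ₁ (Set.range nseq) ≠ upperPorosityInf μ₂ (Set.range nseq) ∨
      upperPorosityInf μ₂ (Set.range nseq) = 1 := by
  
  by_contra hcon
  push_neg at hcon
  obtain ⟨heq, hne1⟩ := hcon
  have h1 := upper_eq hμ₁anti hμ₁pos hmono
  have h2 := upper_eq hμ₂anti hμ₂pos hmono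
  set r₁ : ℕ → ℝ := fun k => μ₁ (nseq (k+1)) / μ₁ (nseq k) with hr1def
  set r₂ : ℕ → ℝ := fun k => μ₂ (nseq (k+1)) / μ₂ (nseq k) with hr2def
  set L₁ : ℝ := Filter.liminf r₁ atTop with hL1def
  set L₂ : ℝ := Filter.liminf r₂ atTop with hL2def
  have hLeq : L₁ = L₂ := by rw [h1, h2] at heq; linarith
  have hr1_pos : ∀ k, 0 < r₁ k := fun k => div_pos (hμ₁pos _) (hμ₁pos _)
  have hr2_pos : ∀ k, 0 < r₂ k := fun k => div_pos (hμ₂pos _) (hμ₂pos _)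
  have hr1_lt1 : ∀ k, r₁ k < 1 := fun k =>
    (div_lt_one (hμ₁pos _)).mpr (hμ₁anti (hmono (Nat.lt_succ_self k)))
  have hr2_lt1 : ∀ k, r₂ k < 1 := fun k =>
    (div_lt_one (hμ₂pos _)).mpr (hμ₂anti (hmono (Nat.lt_succ_self k)))
  have hr1bdd_ge : IsBoundedUnder (· ≥ ·) atTop r₁ :=
    isBoundedUnder_of ⟨0, fun k => (hr1_pos k).le⟩
  have hr2bdd_ge : IsBoundedUnder (· ≥ ·) atTop r₂ :=
    isBoundedUnder_of ⟨0, fun k => (hr2_pos k).le⟩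
  have hr2cob_ge : IsCoboundedUnder (· ≥ ·) atTop r₂ :=
    (isBoundedUnder_of ⟨1, fun k => (hr2_lt1 k).le⟩ :
      IsBoundedUnder (· ≤ ·) atTop r₂).isCoboundedUnder_ge
  have hL2pos : 0 < L₂ := by
    have hge : 0 ≤ L₂ := le_liminf_of_le
      ((isBoundedUnder_of ⟨1, fun k => (hr2_lt1 k).le⟩ :
        IsBoundedUnder (· ≤ ·) atTop r₂).isCoboundedUnder_ge)
      (Filter.Eventually.of_forall fun k => (hr2_pos k).le)
    rcases hge.lt_or_eq with h | h
    · exact h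
    · exact absurd (by rw [h2, ← h]; ring) hne1
  have hratio : (fun k => μ₁ (nseq (k + 1)) * μ₂ (nseq k) /
      (μ₁ (nseq k) * μ₂ (nseq (k + 1)))) = fun k => r₁ k / r₂ k := by
    funext k
    rw [hr1def, hr2def]
    have a1 := (hμ₁pos (nseq k)).ne'
    have a2 := (hμ₂pos (nseq k)).ne'
    have a3 := (hμ₁pos (nseq (k+1))).ne'
    have a4 := (hμ₂pos (nseq (k+1))).ne'
    field_simp
  rw [hratio] at hα
  -- In all cases produce β with eventual comparison
  have hcases : (∃ β : ℝ, 1 < β ∧ ∀ᶠ k in atTop, β * r₂ k ≤ r₁ k) ∨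
      (∃ β : ℝ, 0 < β ∧ β < 1 ∧ ∀ᶠ k in atTop, r₁ k ≤ β * r₂ k) := by
    rcases hα with ⟨α, hα01 | hα1, htend⟩ | htop
    · right
      refine ⟨(α + 1) / 2, by linarith [hα01.1], by linarith [hα01.2], ?_⟩
      filter_upwards [htend.eventually_lt_const (by linarith [hα01.2] : α < (α + 1) / 2)] with k hk
      rw [div_lt_iff₀ (hr2_pos k)] at hk
      linarith
    · left
      refine ⟨(α + 1) / 2, by linarith, ?_⟩
      filter_upwards [htend.eventually_const_lt (by linarith : (α + 1) / 2 < α)] with k hk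
      rw [lt_div_iff₀ (hr2_pos k)] at hk
      linarith
    · left
      refine ⟨2, one_lt_two, ?_⟩
      filter_upwards [htop.eventually_ge_atTop 2] with k hk
      rw [le_div_iff₀ (hr2_pos k)] at hk
      linarith
  rcases hcases with ⟨β, hβ, hev⟩ | ⟨β, hβ0, hβ1, hev⟩
  · -- β > 1 : L₁ ≥ β * L₂, contradiction with L₁ = L₂ > 0
    have hge : β * L₂ ≤ L₁ := by
      refine le_of_forall_sub_le ?_
      intro ε hε
      have hδ : (0:ℝ) < ε / β := div_pos hε (by linarith)
      have hev2 : ∀ᶠ k in atTop, L₂ - ε / β < r₂ k :=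
        eventually_lt_of_lt_liminf (by rw [hL2def]; linarith) hr2bdd_ge
      have : β * L₂ - ε ≤ Filter.liminf r₁ atTop := by
        refine le_liminf_of_le (isBoundedUnder_of ⟨1, fun k => (hr1_lt1 k).le⟩ :
          IsBoundedUnder (· ≤ ·) atTop r₁).isCoboundedUnder_ge ?_
        filter_upwards [hev, hev2] with k hk1 hk2
        have h3 : β * (L₂ - ε / β) ≤ β * r₂ k :=
          mul_le_mul_of_nonneg_left hk2.le (by linarith)
        have h4 : β * (L₂ - ε / β) = β * L₂ - ε := by
          field_simp
        linarith
      rw [← hL1def] at this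
      linarith
    nlinarith
  · -- β < 1 : L₁ ≤ β * L₂, contradiction
    have hle : L₁ ≤ β * L₂ := by
      refine le_of_forall_sub_le ?_
      intro ε hε
      have hδ : (0:ℝ) < ε / β := div_pos hε hβ0
      have hfreq : ∃ᶠ k in atTop, r₂ k < L₂ + ε / β :=
        frequently_lt_of_liminf_lt hr2cob_ge (by rw [hL2def]; linarith)
      have hfreq2 : ∃ᶠ k in atTop, r₁ k ≤ β * L₂ + ε := by
        refine (hfreq.and_eventually hev).mono ?_
        rintro k ⟨hk1, hk2⟩
        have h3 : β * r₂ k ≤ β * (L₂ + ε / β) :=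
          mul_le_mul_of_nonneg_left hk1.le hβ0.le
        have h4 : β * (L₂ + ε / β) = β * L₂ + ε := by field_simp
        linarith
      have := liminf_le_of_frequently_le hfreq2 hr1bdd_ge
      rw [← hL1def] at this
      linarith
    nlinarith
end
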